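/- arXiv:1806.05905 — 5 statements merged into one kernel-verified Lean document; each statement's English description precedes it below -/
import Mathlib

section
/- Let N ≥ 1 and let M = (M_0,…,M_{N−1}) ∈ ℕ^N be an exponent vector with M_0 + M_1 + ⋯ + M_{N−1} = N. If 0·M_0 + 1·M_1 + 2·M_2 + ⋯ + (N−1)·M_{N−1} is not congruent to 0 modulo N, then the coefficient c_M of x_0^{M_0}⋯x_{N−1}^{M_{N−1}} in det(Circ(x_0,…,x_{N−1})) is zero. -/
/-- The generic `N × N` circulant matrix over `ℤ[x_0, …, x_{N-1}]`:
its `(i,j)` entry is `x_{(j - i) mod N}`. -/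
noncomputable def genCirc (N : ℕ) : Matrix (Fin N) (Fin N) (MvPolynomial (Fin N) ℤ) :=
  Matrix.of fun i j => MvPolynomial.X (j - i)

/-- The permanent of the generic `N × N` circulant matrix. -/
noncomputable def genCircPer (N : ℕ) : MvPolynomial (Fin N) ℤ :=
  ∑ σ : Equiv.Perm (Fin N), ∏ i : Fin N, genCirc N i (σ i)

/-- `d(N)`: number of monomials with nonzero coefficient in the determinant. -/
noncomputable def dNum (N : ℕ) : ℕ := (genCirc N).det.support.card

/-- `p(N)`: number of monomials with nonzero coefficient in the permanent. -/
noncomputable def pNum (N : ℕ) : ℕ := (genCircPer N).support.card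

lemma fin_sub_cast (N : ℕ) (a b : Fin N) :
    (((a - b : Fin N).val : ZMod N)) = (a.val : ZMod N) - b.val := by
  rw [Fin.sub_def]
  rw [ZMod.natCast_mod, Nat.cast_add]
  have : ((N - b.val : ℕ) : ZMod N) = -(b.val : ZMod N) := by
    rw [Nat.cast_sub b.isLt.le]; simp
  rw [this]; ring

lemma weight_sum (N : ℕ) (f : Fin N → Fin N) :
    ∑ k : Fin N, k.val * ((∑ i : Fin N, Finsupp.single (f i) 1 : Fin N →₀ ℕ) k)
      = ∑ i : Fin N, (f i).val := by
  simp only [Finsupp.finset_sum_apply, Finset.mul_sum]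
  rw [Finset.sum_comm]
  simp [Finsupp.single_apply, eq_comm]

/-- If `M_0 + ⋯ + M_{N-1} = N` but `0·M_0 + 1·M_1 + ⋯ + (N-1)·M_{N-1} ≢ 0 (mod N)`,
then the coefficient of `x_0^{M_0} ⋯ x_{N-1}^{M_{N-1}}` in the determinant of the generic
circulant matrix is zero. -/
theorem stmt2 (N : ℕ) (hN : 1 ≤ N) (M : Fin N →₀ ℕ)
    (hsum : ∑ i, M i = N)
    (hw : ¬ (N ∣ ∑ i : Fin N, i.val * M i)) :
    MvPolynomial.coeff M (genCirc N).det = 0 := by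
  classical
  rw [Matrix.det_apply, MvPolynomial.coeff_sum]
  apply Finset.sum_eq_zero
  intro σ _
  have hprod : ∏ i : Fin N, genCirc N (σ i) i
      = MvPolynomial.monomial (∑ i : Fin N, Finsupp.single (i - σ i) 1) (1 : ℤ) := by
    rw [MvPolynomial.monomial_sum_one]
    apply Finset.prod_congr rfl
    intro i _
    simp [genCirc, MvPolynomial.X]
  rw [MvPolynomial.coeff_smul, hprod, MvPolynomial.coeff_monomial]
  have hne : M ≠ ∑ i : Fin N, Finsupp.single (i - σ i) 1 := by
    intro hM
    apply hw
    rw [← ZMod.natCast_eq_zero_iff]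
    have h1 : ∑ k : Fin N, k.val * M k = ∑ i : Fin N, ((i - σ i : Fin N)).val := by
      rw [hM]; exact weight_sum N _
    rw [h1]
    push_cast
    rw [Finset.sum_congr rfl (fun i _ => fin_sub_cast N i (σ i))]
    rw [Finset.sum_sub_distrib]
    rw [Equiv.sum_comp σ (fun i : Fin N => (i.val : ZMod N))]
    ring
  rw [if_neg (Ne.symm hne), smul_zero]
end

section
/- Let N be a prime number and let M = (M_0,…,M_{N−1}) ∈ ℕ^N be an exponent vector with M_0 + M_1 + ⋯ + M_{N−1} = N and 0·M_0 + 1·M_1 + ⋯ + (N−1)·M_{N−1} ≡ 0 (mod N). Then the coefficient c_M of x_0^{M_0}⋯x_{N−1}^{M_{N−1}} in det(Circ(x_0,…,x_{N−1})) is nonzero. -/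
open Finset MvPolynomial
open Fin.NatCast Fin.CommRing

namespace CircAux

variable {N : ℕ} {ζ : ℂ}

/-- The multiset of values of `g`, as a finsupp. -/
noncomputable def countF (g : Fin N → Fin N) : Fin N →₀ ℕ := ∑ j, Finsupp.single (g j) 1

/-- Functions whose value multiset is `M`. -/
noncomputable def S (M : Fin N →₀ ℕ) : Finset (Fin N → Fin N) :=
  Finset.univ.filter (fun g => countF g = M)

/-- The weight of `g` as a natural number. -/
def W (g : Fin N → Fin N) : ℕ := ∑ j, j.val * (g j).val

/-- The weight of `g` mod `N`. -/
def wt [NeZero N] (g : Fin N → Fin N) : Fin N := (W g : Fin N)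

/-- Number of functions with value multiset `M` and weight `w` mod `N`. -/
noncomputable def Nw [NeZero N] (M : Fin N →₀ ℕ) (w : Fin N) : ℕ :=
  ((S M).filter (fun g => wt g = w)).card

lemma wt_eq [NeZero N] (g : Fin N → Fin N) : wt g = ∑ j, j * g j := by
  unfold wt W
  push_cast
  simp [Fin.cast_val_eq_self]

lemma countF_apply (g : Fin N → Fin N) (k : Fin N) :
    countF g k = (Finset.univ.filter (fun j => g j = k)).card := by
  classical
  simp only [countF, Finsupp.finset_sum_apply, Finsupp.single_apply]
  rw [Finset.card_filter]

lemma sum_comp_countF {A : Type*} [AddCommMonoid A] (g : Fin N → Fin N) (f : Fin N → A) :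
    ∑ j, f (g j) = ∑ k, countF g k • f k := by
  classical
  rw [← Finset.sum_fiberwise' Finset.univ g f]
  exact Finset.sum_congr rfl fun k _ => by
    rw [Finset.sum_const, countF_apply]

lemma countF_comp_equiv (g : Fin N → Fin N) (e : Equiv.Perm (Fin N)) :
    countF (fun j => g (e j)) = countF g := by
  unfold countF
  exact Equiv.sum_comp e (fun j => Finsupp.single (g j) 1)

lemma zpow_mod (hζ : IsPrimitiveRoot ζ N) {a b : ℕ} (h : a ≡ b [MOD N]) :
    ζ ^ a = ζ ^ b := by
  have h1 : ∀ n : ℕ, ζ ^ n = ζ ^ (n % N) := by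
    intro n
    conv_lhs => rw [← Nat.div_add_mod n N]
    rw [pow_add, pow_mul, hζ.pow_eq_one, one_pow, one_mul]
  rw [h1 a, h1 b, show a % N = b % N from h]

lemma det_factor [NeZero N] (hζ : IsPrimitiveRoot ζ N) :
    (Matrix.of fun i j : Fin N => (X (j - i) : MvPolynomial (Fin N) ℂ)).det
      = ∏ j : Fin N, ∑ k : Fin N, C (ζ ^ (j.val * k.val)) * X k := by
  set A : Matrix (Fin N) (Fin N) (MvPolynomial (Fin N) ℂ) :=
    Matrix.of fun i j : Fin N => (X (j - i) : MvPolynomial (Fin N) ℂ) with hA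
  set V : Matrix (Fin N) (Fin N) (MvPolynomial (Fin N) ℂ) :=
    Matrix.of fun i j : Fin N => (C (ζ ^ (i.val * j.val)) : MvPolynomial (Fin N) ℂ) with hV
  set d : Fin N → MvPolynomial (Fin N) ℂ :=
    fun j => ∑ k : Fin N, C (ζ ^ (j.val * k.val)) * X k with hd
  have hdetV : V.det ≠ 0 := by
    have hVmap : V = (Matrix.vandermonde (fun i : Fin N => ζ ^ (i.val))).map
        (C : ℂ →+* MvPolynomial (Fin N) ℂ) := by
      ext i j
      simp [hV, Matrix.vandermonde, pow_mul]
    rw [hVmap, ← RingHom.mapMatrix_apply, ← RingHom.map_det, Matrix.det_vandermonde]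
    rw [_root_.map_ne_zero_iff _ (C_injective _ ℂ)]
    refine Finset.prod_ne_zero_iff.2 fun i _ => Finset.prod_ne_zero_iff.2 fun j hj => ?_
    rw [Finset.mem_Ioi] at hj
    refine sub_ne_zero.2 fun hij => ?_
    exact absurd (hζ.pow_inj j.isLt i.isLt hij) (Fin.lt_iff_val_lt_val.1 hj).ne'
  have key : A * V = V * Matrix.diagonal d := by
    refine Matrix.ext fun i j => ?_
    rw [Matrix.mul_apply, Matrix.mul_diagonal]
    have : ∀ m : Fin N, A i (m + i) * V (m + i) j
        = C (ζ ^ (i.val * j.val)) * (C (ζ ^ (j.val * m.val)) * X m) := by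
      intro m
      simp only [hA, hV, Matrix.of_apply, add_sub_cancel_right]
      rw [mul_comm, ← mul_assoc, ← C_mul, ← pow_add]
      refine congrArg (fun z => C z * X m) ?_
      apply zpow_mod hζ
      calc ((m + i).val * j.val) ≡ (m.val + i.val) * j.val [MOD N] := by
            exact Nat.ModEq.mul_right _ (by rw [Fin.val_add]; exact (Nat.mod_modEq _ _))
        _ = i.val * j.val + j.val * m.val := by ring
    calc ∑ k, A i k * V k j = ∑ m, A i (m + i) * V (m + i) j :=
          (Equiv.sum_comp (Equiv.addRight i) (fun k => A i k * V k j)).symm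
      _ = ∑ m, C (ζ ^ (i.val * j.val)) * (C (ζ ^ (j.val * m.val)) * X m) := by
          exact Finset.sum_congr rfl fun m _ => this m
      _ = V i j * d j := by rw [← Finset.mul_sum]; simp [hV, hd]
  have hdet := congrArg Matrix.det key
  rw [Matrix.det_mul, Matrix.det_mul, Matrix.det_diagonal, mul_comm V.det] at hdet
  exact mul_right_cancel₀ hdetV hdet

lemma prod_X_subset {R : Type*} [CommSemiring R] (g : Fin N → Fin N) (s : Finset (Fin N)) :
    (∏ j ∈ s, (X (g j) : MvPolynomial (Fin N) R))
      = monomial (∑ j ∈ s, Finsupp.single (g j) 1) 1 := by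
  classical
  induction s using Finset.induction with
  | empty => simp
  | @insert a s h ih =>
      rw [Finset.prod_insert h, Finset.sum_insert h, ih, ← pow_one (X (g a)),
        X_pow_eq_monomial, monomial_mul, one_mul]

lemma prod_X_eq_monomial {R : Type*} [CommSemiring R] (g : Fin N → Fin N) :
    (∏ j, (X (g j) : MvPolynomial (Fin N) R)) = monomial (countF g) 1 :=
  prod_X_subset g Finset.univ

lemma coeff_prod_linear (c : Fin N → Fin N → ℂ) (M : Fin N →₀ ℕ) :
    coeff M (∏ j : Fin N, ∑ k : Fin N, C (c j k) * X k)
      = ∑ g ∈ S M, ∏ j, c j (g j) := by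
  classical
  rw [Finset.prod_univ_sum]
  have h1 : ∀ g : Fin N → Fin N,
      (∏ j, C (c j (g j)) * X (g j)) = C (∏ j, c j (g j)) * monomial (countF g) 1 := by
    intro g
    rw [Finset.prod_mul_distrib, prod_X_eq_monomial, ← map_prod]
  rw [Fintype.piFinset_univ, coeff_sum]
  rw [Finset.sum_congr rfl fun g _ => congrArg (coeff M) (h1 g)]
  simp only [coeff_C_mul, coeff_monomial]
  rw [S, Finset.sum_filter]
  refine Finset.sum_congr rfl fun g _ => ?_
  by_cases h : countF g = M <;> simp [h]

lemma coeff_det [NeZero N] (hζ : IsPrimitiveRoot ζ N) (M : Fin N →₀ ℕ) :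
    ((coeff M (genCirc N).det : ℤ) : ℂ) = ∑ g ∈ S M, ζ ^ W g := by
  have h0 : ((coeff M (genCirc N).det : ℤ) : ℂ)
      = coeff M ((MvPolynomial.map (Int.castRingHom ℂ)) (genCirc N).det) := by
    rw [coeff_map]; rfl
  have h1 : (MvPolynomial.map (Int.castRingHom ℂ)) (genCirc N).det
      = (Matrix.of fun i j : Fin N => (X (j - i) : MvPolynomial (Fin N) ℂ)).det := by
    rw [RingHom.map_det]
    congr 1
    refine Matrix.ext fun i j => ?_
    simp [genCirc, RingHom.mapMatrix_apply, Matrix.map_apply]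
  rw [h0, h1, det_factor hζ, coeff_prod_linear (fun j k => ζ ^ (j.val * k.val)) M]
  refine Finset.sum_congr rfl fun g _ => ?_
  rw [W, ← Finset.prod_pow_eq_pow_sum]

/-- Grouping by weight classes. -/
lemma sum_zeta_W [NeZero N] (hζ : IsPrimitiveRoot ζ N) (M : Fin N →₀ ℕ) :
    ∑ g ∈ S M, ζ ^ W g = ∑ w : Fin N, (Nw M w : ℂ) * ζ ^ w.val := by
  classical
  have h1 : ∀ g : Fin N → Fin N, ζ ^ W g = ζ ^ (wt g).val := by
    intro g
    refine zpow_mod hζ ?_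
    rw [wt, Fin.val_natCast]
    exact (Nat.mod_modEq _ _).symm
  rw [Finset.sum_congr rfl fun g _ => h1 g]
  rw [← Finset.sum_fiberwise' (S M) wt (fun w => ζ ^ w.val)]
  refine Finset.sum_congr rfl fun w _ => ?_
  rw [Finset.sum_const, Nw, nsmul_eq_mul]

lemma exists_inv [NeZero N] (hp : N.Prime) {w : Fin N} (hw : w ≠ 0) :
    ∃ v : Fin N, w * v = 1 := by
  have hvne : w.val ≠ 0 := fun h => hw (by apply Fin.ext; simp [h])
  have hcop : Nat.Coprime w.val N := by
    rw [Nat.coprime_comm]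
    exact (Nat.Prime.coprime_iff_not_dvd hp).2 fun hdvd =>
      hvne (Nat.eq_zero_of_dvd_of_lt hdvd w.isLt)
  obtain ⟨m, -, hm⟩ := Nat.exists_mul_mod_eq_one_of_coprime hcop hp.one_lt
  refine ⟨(m : Fin N), ?_⟩
  have : w * (m : Fin N) = ((w.val * m : ℕ) : Fin N) := by
    rw [Nat.cast_mul, Fin.cast_val_eq_self]
  rw [this]
  have hone : ((1 : Fin N) : ℕ) = 1 := by
    rw [Fin.val_one']
    exact Nat.mod_eq_of_lt hp.one_lt
  apply Fin.ext
  rw [Fin.val_natCast, hm, hone]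

/-- Multiplication by a unit as a permutation. -/
def mulPerm [NeZero N] {u t : Fin N} (hut : u * t = 1) : Equiv.Perm (Fin N) :=
  ⟨fun x => u * x, fun x => t * x,
   fun x => by show t * (u * x) = x; rw [← mul_assoc, mul_comm t u, hut, one_mul],
   fun x => by show u * (t * x) = x; rw [← mul_assoc, hut, one_mul]⟩

lemma wt_comp_mul [NeZero N] {u t : Fin N} (hut : u * t = 1) (g : Fin N → Fin N) :
    wt (fun j => g (u * j)) = t * wt g := by
  have htu : t * u = 1 := by rwa [mul_comm] at hut
  rw [wt_eq, wt_eq, Finset.mul_sum]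
  calc ∑ j, j * g (u * j) = ∑ x, (mulPerm htu x) * g (u * mulPerm htu x) :=
        (Equiv.sum_comp (mulPerm htu) (fun j => j * g (u * j))).symm
    _ = ∑ x, t * (x * g x) := by
        refine Finset.sum_congr rfl fun x _ => ?_
        show (t * x) * g (u * (t * x)) = t * (x * g x)
        rw [← mul_assoc u t x, hut, one_mul, mul_assoc]

lemma Nw_ne_zero [NeZero N] (hp : N.Prime) (M : Fin N →₀ ℕ) {w : Fin N} (hw : w ≠ 0) :
    Nw M w = Nw M 1 := by
  classical
  obtain ⟨v, hwv⟩ := exists_inv hp hw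
  have hvw : v * w = 1 := by rwa [mul_comm] at hwv
  unfold Nw
  refine Finset.card_nbij' (fun g => fun j => g (w * j)) (fun g => fun j => g (v * j))
    ?_ ?_ ?_ ?_
  · intro g hg
    rw [Finset.mem_coe, Finset.mem_filter] at hg ⊢
    obtain ⟨hg1, hg2⟩ := hg
    rw [S, Finset.mem_filter] at hg1 ⊢
    refine ⟨⟨Finset.mem_univ _, ?_⟩, ?_⟩
    · show countF (fun j => g (w * j)) = M
      rw [← hg1.2]
      exact countF_comp_equiv g (mulPerm hwv)
    · show wt (fun j => g (w * j)) = 1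
      rw [wt_comp_mul hwv g, hg2, hvw]
  · intro g hg
    rw [Finset.mem_coe, Finset.mem_filter] at hg ⊢
    obtain ⟨hg1, hg2⟩ := hg
    rw [S, Finset.mem_filter] at hg1 ⊢
    refine ⟨⟨Finset.mem_univ _, ?_⟩, ?_⟩
    · show countF (fun j => g (v * j)) = M
      rw [← hg1.2]
      exact countF_comp_equiv g (mulPerm hvw)
    · show wt (fun j => g (v * j)) = w
      rw [wt_comp_mul hvw g, hg2, mul_one]
  · intro g _
    funext j
    show g (w * (v * j)) = g j
    rw [← mul_assoc, hwv, one_mul]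
  · intro g _
    funext j
    show g (v * (w * j)) = g j
    rw [← mul_assoc, hvw, one_mul]

lemma sum_val_eq_zero [NeZero N] {M : Fin N →₀ ℕ} (hw : N ∣ ∑ i : Fin N, i.val * M i)
    {g : Fin N → Fin N} (hg : countF g = M) : ∑ j, g j = (0 : Fin N) := by
  have h1 : (∑ j, g j : Fin N) = ((∑ j, (g j).val : ℕ) : Fin N) := by
    push_cast
    simp [Fin.cast_val_eq_self]
  have h2 : ∑ j : Fin N, (g j).val = ∑ k : Fin N, countF g k • k.val :=
    sum_comp_countF g (fun k => k.val)
  obtain ⟨c, hc⟩ := hw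
  have h3 : ∑ k : Fin N, countF g k • k.val = N * c := by
    rw [← hc, hg]
    exact Finset.sum_congr rfl fun k _ => by rw [smul_eq_mul, mul_comm]
  rw [h1, h2, h3]
  push_cast
  simp [Fin.natCast_self]

lemma wt_translate [NeZero N] {M : Fin N →₀ ℕ} (hw : N ∣ ∑ i : Fin N, i.val * M i)
    {g : Fin N → Fin N} (hg : countF g = M) (c : Fin N) :
    wt (fun j => g (j + c)) = wt g := by
  rw [wt_eq, wt_eq]
  calc ∑ j, j * g (j + c) = ∑ j, (j + c - c) * g (j + c) := by
        refine Finset.sum_congr rfl fun j _ => by rw [add_sub_cancel_right]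
    _ = ∑ j, (j - c) * g j :=
        Equiv.sum_comp (Equiv.addRight c) (fun j => (j - c) * g j)
    _ = ∑ j, (j * g j - c * g j) := by
        refine Finset.sum_congr rfl fun j _ => sub_mul j c (g j)
    _ = (∑ j, j * g j) - (∑ j, c * g j) := Finset.sum_sub_distrib _ _
    _ = ∑ j, j * g j := by
        rw [← Finset.mul_sum, sum_val_eq_zero hw hg, mul_zero, sub_zero]

lemma dvd_Nw_zero [NeZero N] (hp : N.Prime) (M : Fin N →₀ ℕ)
    (hw : N ∣ ∑ i : Fin N, i.val * M i) (hM : ∀ k, M k < N) : N ∣ Nw M 0 := by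
  classical
  haveI : Fact N.Prime := ⟨hp⟩
  set t : Finset (Fin N → Fin N) := (S M).filter (fun g => wt g = 0) with ht
  have hclosed : ∀ g ∈ t, ∀ c : Fin N, (fun j => g (j + c)) ∈ t := by
    intro g hg c
    rw [ht, Finset.mem_filter] at hg ⊢
    obtain ⟨hg1, hg2⟩ := hg
    rw [S, Finset.mem_filter] at hg1
    have hgS : countF g = M := hg1.2
    constructor
    · rw [S, Finset.mem_filter]
      refine ⟨Finset.mem_univ _, ?_⟩
      show countF (fun j => g (j + c)) = M
      rw [← hgS]
      exact countF_comp_equiv g (Equiv.addRight c)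
    · rw [wt_translate hw hgS c, hg2]
  letI : SMul (Multiplicative (Fin N)) {g // g ∈ t} :=
    ⟨fun c g => ⟨fun j => g.1 (j + c.toAdd), hclosed g.1 g.2 c.toAdd⟩⟩
  letI : MulAction (Multiplicative (Fin N)) {g // g ∈ t} :=
    { one_smul := fun g => Subtype.ext (funext fun j => by
        show g.1 (j + (1 : Multiplicative (Fin N)).toAdd) = g.1 j
        rw [toAdd_one, add_zero])
      mul_smul := fun x y g => Subtype.ext (funext fun j => by
        show g.1 (j + (x * y).toAdd) = g.1 ((j + x.toAdd) + y.toAdd)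
        rw [toAdd_mul, add_assoc]) }
  have hG : IsPGroup N (Multiplicative (Fin N)) := IsPGroup.of_card (by
    rw [Nat.card_congr (Multiplicative.toAdd (α := Fin N)), Nat.card_eq_fintype_card,
      Fintype.card_fin, pow_one])
  have hcard := hG.card_modEq_card_fixedPoints ({g // g ∈ t})
  have hempty : IsEmpty (MulAction.fixedPoints (Multiplicative (Fin N)) {g // g ∈ t}) := by
    refine ⟨fun x => ?_⟩
    obtain ⟨⟨g, hg⟩, hfix⟩ := x
    have h1 : ∀ j : Fin N, g (j + 1) = g j := by
      intro j
      have h2 := hfix (Multiplicative.ofAdd (1 : Fin N))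
      have h3 := congrArg Subtype.val h2
      exact congrFun h3 j
    have haux : ∀ n : ℕ, g ((n : Fin N)) = g 0 := by
      intro n
      induction n with
      | zero => norm_num
      | succ n ih =>
          rw [show ((n + 1 : ℕ) : Fin N) = (n : Fin N) + 1 by push_cast; ring, h1, ih]
    have hconst : ∀ j : Fin N, g j = g 0 := fun j => by
      rw [← Fin.cast_val_eq_self j, haux]
    rw [ht, Finset.mem_filter, S, Finset.mem_filter] at hg
    have hgS : countF g = M := hg.1.2
    have hMg : M (g 0) = N := by
      rw [← hgS, countF_apply]
      rw [Finset.filter_true_of_mem (fun j _ => hconst j), Finset.card_univ, Fintype.card_fin]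
    exact absurd hMg (hM (g 0)).ne
  have hfix0 : Nat.card (MulAction.fixedPoints (Multiplicative (Fin N)) {g // g ∈ t}) = 0 :=
    @Nat.card_of_isEmpty _ hempty
  rw [hfix0] at hcard
  have hdvd := (Nat.modEq_zero_iff_dvd).1 hcard
  have hNt : Nat.card {g // g ∈ t} = Nw M 0 := Nat.card_eq_finsetCard t
  rwa [hNt] at hdvd

lemma card_S (M : Fin N →₀ ℕ) (hsum : ∑ i, M i = N) :
    (S M).card = Nat.multinomial Finset.univ M := by
  classical
  have h1 : ((∑ k : Fin N, X k : MvPolynomial (Fin N) ℕ)) ^ N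
      = ∑ g : Fin N → Fin N, monomial (countF g) 1 := by
    have h0 : ((∑ k : Fin N, X k : MvPolynomial (Fin N) ℕ)) ^ N
        = ∏ _j : Fin N, (∑ k : Fin N, X k : MvPolynomial (Fin N) ℕ) := by
      rw [Finset.prod_const, Finset.card_univ, Fintype.card_fin]
    rw [h0, Finset.prod_univ_sum, Fintype.piFinset_univ]
    exact Finset.sum_congr rfl fun g _ => prod_X_eq_monomial g
  have h2 : coeff M ((∑ k : Fin N, X k : MvPolynomial (Fin N) ℕ) ^ N) = (S M).card := by
    rw [h1, coeff_sum]
    rw [S, Finset.card_filter]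
    refine Finset.sum_congr rfl fun g _ => ?_
    rw [coeff_monomial]
  have h3 : coeff M ((∑ k : Fin N, X k : MvPolynomial (Fin N) ℕ) ^ N)
      = Nat.multinomial Finset.univ M := by
    rw [Finset.sum_pow_eq_sum_piAntidiag, coeff_sum]
    have hterm : ∀ k ∈ Finset.piAntidiag Finset.univ N,
        coeff M ((Nat.multinomial Finset.univ k : MvPolynomial (Fin N) ℕ) * ∏ i, X i ^ k i)
          = if k = ⇑M then Nat.multinomial Finset.univ k else 0 := by
      intro k _
      have hkF : ∀ i, (Finsupp.equivFunOnFinite.symm k) i = k i := fun i => rfl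
      have hmono : (∏ i : Fin N, (X i : MvPolynomial (Fin N) ℕ) ^ k i)
          = monomial (Finsupp.equivFunOnFinite.symm k) 1 := by
        rw [← prod_X_pow_eq_monomial]
        rw [show (∏ i : Fin N, (X i : MvPolynomial (Fin N) ℕ) ^ k i)
            = ∏ i : Fin N, (X i : MvPolynomial (Fin N) ℕ) ^ (Finsupp.equivFunOnFinite.symm k) i
          from Finset.prod_congr rfl fun i _ => by rw [hkF]]
        exact (Finset.prod_subset (Finset.subset_univ _) (fun i _ hi => by
          rw [Finsupp.notMem_support_iff.1 hi, pow_zero])).symm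
      rw [hmono, ← nsmul_eq_mul, coeff_smul, coeff_monomial, smul_eq_mul]
      have hiff : (Finsupp.equivFunOnFinite.symm k = M) ↔ (k = ⇑M) := by
        rw [Equiv.symm_apply_eq]
        exact Iff.rfl
      by_cases h : k = ⇑M
      · rw [if_pos (hiff.2 h), if_pos h, mul_one]
      · rw [if_neg (fun hh => h (hiff.1 hh)), if_neg h, mul_zero]
    rw [Finset.sum_congr rfl hterm, Finset.sum_ite_eq' (Finset.piAntidiag Finset.univ N) (⇑M)
      (fun k => (Nat.multinomial Finset.univ k : ℕ))]
    rw [if_pos (by rw [Finset.mem_piAntidiag]; exact ⟨hsum, fun i _ => Finset.mem_univ i⟩)]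
  rw [← h2, h3]

end CircAux

/-- If `N` is prime, `M_0 + ⋯ + M_{N-1} = N` and
`0·M_0 + 1·M_1 + ⋯ + (N-1)·M_{N-1} ≡ 0 (mod N)`, then the coefficient of
`x_0^{M_0} ⋯ x_{N-1}^{M_{N-1}}` in the determinant of the generic circulant matrix
is nonzero. -/
theorem stmt3 (N : ℕ) (hp : N.Prime) (M : Fin N →₀ ℕ)
    (hsum : ∑ i, M i = N)
    (hw : N ∣ ∑ i : Fin N, i.val * M i) :
    MvPolynomial.coeff M (genCirc N).det ≠ 0 := by
  haveI : NeZero N := ⟨hp.ne_zero⟩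
  intro hc0
  obtain ⟨ζ, hζ⟩ : ∃ ζ : ℂ, IsPrimitiveRoot ζ N :=
    ⟨_, Complex.isPrimitiveRoot_exp N hp.ne_zero⟩
  have hcoeff : ((MvPolynomial.coeff M (genCirc N).det : ℤ) : ℂ)
      = ∑ w : Fin N, (CircAux.Nw M w : ℂ) * ζ ^ w.val := by
    rw [CircAux.coeff_det hζ M, CircAux.sum_zeta_W hζ M]
  rw [hc0, Int.cast_zero] at hcoeff
  have hNw : ∀ w : Fin N, w ≠ 0 → CircAux.Nw M w = CircAux.Nw M 1 :=
    fun w hw' => CircAux.Nw_ne_zero hp M hw'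
  have hgeom : ∑ w : Fin N, ζ ^ w.val = 0 := by
    rw [Fin.sum_univ_eq_sum_range (fun i => ζ ^ i) N]
    exact hζ.geom_sum_eq_zero hp.one_lt
  have herase : ∑ w ∈ Finset.univ.erase (0 : Fin N), ζ ^ w.val = -1 := by
    have h1 := Finset.add_sum_erase Finset.univ (fun w : Fin N => ζ ^ w.val) (Finset.mem_univ 0)
    rw [hgeom] at h1
    simp only [Fin.val_zero, pow_zero] at h1
    linear_combination h1
  have hstep : ∑ w ∈ Finset.univ.erase (0 : Fin N), (CircAux.Nw M w : ℂ) * ζ ^ w.val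
      = (CircAux.Nw M 1 : ℂ) * ∑ w ∈ Finset.univ.erase (0 : Fin N), ζ ^ w.val := by
    rw [Finset.mul_sum]
    refine Finset.sum_congr rfl fun w hw' => ?_
    rw [hNw w (Finset.ne_of_mem_erase hw')]
  have hmain' : ∑ w : Fin N, (CircAux.Nw M w : ℂ) * ζ ^ w.val
      = (CircAux.Nw M 0 : ℂ) - (CircAux.Nw M 1 : ℂ) := by
    rw [← Finset.add_sum_erase Finset.univ
      (fun w : Fin N => (CircAux.Nw M w : ℂ) * ζ ^ w.val) (Finset.mem_univ 0),
      hstep, herase]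
    simp only [Fin.val_zero, pow_zero, mul_one, mul_neg_one]
    ring
  have hmain : (0 : ℂ) = (CircAux.Nw M 0 : ℂ) - (CircAux.Nw M 1 : ℂ) := hcoeff.trans hmain'
  have hN01 : CircAux.Nw M 0 = CircAux.Nw M 1 := by
    have h2 : (CircAux.Nw M 0 : ℂ) = (CircAux.Nw M 1 : ℂ) := by
      linear_combination -hmain
    exact_mod_cast h2
  have hTsum : (CircAux.S M).card = ∑ w : Fin N, CircAux.Nw M w :=
    Finset.card_eq_sum_card_fiberwise (fun g _ => Finset.mem_univ (CircAux.wt g))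
  have hall : ∀ w : Fin N, CircAux.Nw M w = CircAux.Nw M 0 := by
    intro w
    by_cases h : w = 0
    · rw [h]
    · rw [hNw w h, hN01]
  have hTN : (CircAux.S M).card = N * CircAux.Nw M 0 := by
    rw [hTsum, Finset.sum_congr rfl fun w _ => hall w, Finset.sum_const, Finset.card_univ,
      Fintype.card_fin, smul_eq_mul]
  have hspec := Nat.multinomial_spec Finset.univ ⇑M
  rw [hsum] at hspec
  have hTmult := CircAux.card_S M hsum
  by_cases hM : ∀ k : Fin N, M k < N
  · obtain ⟨a, ha⟩ := CircAux.dvd_Nw_zero hp M hw hM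
    have hfacteq : (∏ i, Nat.factorial (M i)) * ((CircAux.S M).card) = Nat.factorial N := by
      rw [hTmult]; exact hspec
    rw [hTN, ha] at hfacteq
    have hfactN : Nat.factorial N = N * Nat.factorial (N - 1) := by
      conv_lhs => rw [show N = (N - 1) + 1 by have := hp.two_le; omega]
      rw [Nat.factorial_succ, show (N - 1) + 1 = N by have := hp.two_le; omega]
    rw [hfactN] at hfacteq
    have hcancel : (∏ i, Nat.factorial (M i)) * (N * a) = Nat.factorial (N - 1) := by
      refine Nat.eq_of_mul_eq_mul_left hp.pos ?_
      rw [← hfacteq]; ring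
    have hdvdF : N ∣ Nat.factorial (N - 1) :=
      ⟨(∏ i, Nat.factorial (M i)) * a, by rw [← hcancel]; ring⟩
    have hle := (Nat.Prime.dvd_factorial hp).1 hdvdF
    have := hp.two_le
    omega
  · push_neg at hM
    obtain ⟨k, hk⟩ := hM
    have hMkN : M k = N := le_antisymm (le_trans
      (Finset.single_le_sum (fun i _ => Nat.zero_le (M i)) (Finset.mem_univ k))
      (le_of_eq hsum)) hk
    have hMk : Nat.factorial N ≤ ∏ i, Nat.factorial (M i) := by
      calc Nat.factorial N = Nat.factorial (M k) := by rw [hMkN]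
        _ ≤ ∏ i, Nat.factorial (M i) :=
          Finset.single_le_prod' (fun i _ => Nat.one_le_iff_ne_zero.2 (Nat.factorial_ne_zero _))
            (Finset.mem_univ k)
    have hT1 : (CircAux.S M).card = 1 := by
      rw [hTmult]
      have h0 : Nat.multinomial Finset.univ ⇑M ≠ 0 := fun h => by
        rw [h, mul_zero] at hspec
        exact (Nat.factorial_pos N).ne' hspec.symm
      have h2 : Nat.multinomial Finset.univ ⇑M < 2 := by
        by_contra hge
        push_neg at hge
        have h3 : Nat.factorial N * 2 ≤ (∏ i, Nat.factorial (M i)) * Nat.multinomial Finset.univ ⇑M :=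
          Nat.mul_le_mul hMk hge
        rw [hspec] at h3
        have := Nat.factorial_pos N
        omega
      omega
    rw [hTN] at hT1
    have hdvd1 : N ∣ 1 := ⟨CircAux.Nw M 0, hT1.symm⟩
    have := Nat.le_of_dvd one_pos hdvd1
    have := hp.two_le
    omega
end

section
/- For every integer N ≥ 1, N times the number of vectors (a_0,…,a_{N−1}) ∈ ℕ^N satisfying a_0 + a_1 + ⋯ + a_{N−1} = N and a_0 + 2a_1 + ⋯ + N·a_{N−1} ≡ 0 (mod N) equals ∑_{k | N} φ(N/k)·C(2k−1, k), where φ is Euler's totient function, C(·,·) is the binomial coefficient, and the sum ranges over the positive divisors k of N. -/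
open Finset


open PowerSeries in
noncomputable def BN.H (d k : ℕ) : PowerSeries ℂ :=
  PowerSeries.mk (fun m => if d ∣ m then ((m / d + k - 1).choose (m / d) : ℂ) else 0)

open PowerSeries in
lemma BN.geom_inv (u : ℂ) :
    (1 - C u * X) * PowerSeries.mk (fun m => u ^ m) = 1 := by
  ext n
  rw [sub_mul, one_mul, mul_assoc, map_sub]
  cases n with
  | zero => simp
  | succ n => simp [coeff_succ_X_mul, coeff_one, pow_succ, mul_comm]

open PowerSeries in
lemma BN.Hser_inv (d k : ℕ) (hd : 0 < d) :
    (1 - (X : PowerSeries ℂ) ^ d) ^ k * BN.H d k = 1 := by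
  induction k with
  | zero =>
    rw [pow_zero, one_mul]
    ext n
    rw [BN.H, coeff_mk, coeff_one]
    rcases Nat.eq_zero_or_pos n with rfl | hn
    · simp
    · have hn' : ¬ n = 0 := by omega
      rw [if_neg hn']
      by_cases hdn : d ∣ n
      · have h1 : 0 < n / d := Nat.div_pos (Nat.le_of_dvd hn hdn) hd
        have hlt : n / d - 1 < n / d := by omega
        simp [hdn, Nat.choose_eq_zero_of_lt hlt]
      · simp [hdn]
  | succ k ih =>
    have key : (1 - (X : PowerSeries ℂ) ^ d) * BN.H d (k+1) = BN.H d k := by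
      ext n
      rw [BN.H, BN.H, sub_mul, one_mul, map_sub, coeff_X_pow_mul', coeff_mk]
      rcases Nat.lt_or_ge n d with h | h
      · rw [if_neg (by omega : ¬ d ≤ n), sub_zero]
        rw [coeff_mk]
        rcases Nat.eq_zero_or_pos n with rfl | hn
        · simp
        · have hdn : ¬ d ∣ n := fun hh => by
            have := Nat.le_of_dvd hn hh; omega
          rw [if_neg hdn, if_neg hdn]
      · rw [if_pos h, coeff_mk, coeff_mk]
        by_cases hdn : d ∣ n
        · obtain ⟨t, rfl⟩ := hdn
          have ht : 1 ≤ t := by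
            rcases Nat.eq_zero_or_pos t with rfl | h'
            · simp only [Nat.mul_zero] at h; omega
            · exact h'
          obtain ⟨s, rfl⟩ : ∃ s, t = s + 1 := ⟨t - 1, by omega⟩
          have h1 : d * (s + 1) - d = d * s := by
            have : d * (s + 1) = d * s + d := by ring
            omega
          have h2 : d * (s + 1) / d = s + 1 := Nat.mul_div_cancel_left _ hd
          have h3 : d * s / d = s := Nat.mul_div_cancel_left _ hd
          rw [if_pos ⟨s + 1, rfl⟩, h1, if_pos ⟨s, rfl⟩, if_pos ⟨s + 1, rfl⟩, h2, h3]
          have hch : (s + 1 + (k + 1) - 1).choose (s + 1)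
              = (s + k).choose s + (s + 1 + k - 1).choose (s + 1) := by
            have e1 : s + 1 + (k + 1) - 1 = (s + k) + 1 := by omega
            have e2 : s + 1 + k - 1 = s + k := by omega
            rw [e1, e2]
            have := Nat.choose_succ_succ (s + k) s
            simp only [Nat.succ_eq_add_one] at this
            omega
          have e3 : s + (k + 1) - 1 = s + k := by omega
          rw [hch, e3]
          push_cast
          ring
        · have hdn' : ¬ d ∣ (n - d) := fun hh => hdn (by
            have := Nat.dvd_add hh (dvd_refl d)
            rwa [Nat.sub_add_cancel h] at this)
          simp [hdn, hdn']
    rw [pow_succ, mul_assoc, key, ih]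


lemma BN.neg_pow_half (d : ℕ) (hd : 0 < d) (hd2 : 2 ∣ d) (ζ : ℂ) (hζ : IsPrimitiveRoot ζ d) :
    ζ ^ (d / 2) = -1 := by
  have h2 : (ζ ^ (d / 2)) * (ζ ^ (d / 2)) = 1 := by
    rw [← pow_add]
    have : d / 2 + d / 2 = d := by omega
    rw [this, hζ.pow_eq_one]
  rcases mul_self_eq_one_iff.mp h2 with h | h
  · exact absurd h (hζ.pow_ne_one_of_pos_of_lt (by omega) (by omega))
  · exact h

lemma BN.sum_range_add_one_mul_two (d : ℕ) (hd : 0 < d) :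
    (∑ t ∈ range d, (t + 1)) * 2 = d * (d + 1) := by
  have h2 : (∑ t ∈ range d, t) * 2 = d * (d - 1) := Finset.sum_range_id_mul_two d
  have h3 : (∑ t ∈ range d, (t + 1)) = (∑ t ∈ range d, t) + d := by
    rw [Finset.sum_add_distrib, Finset.sum_const, card_range, smul_eq_mul, mul_one]
  rw [h3, Nat.add_mul, h2, ← Nat.left_distrib]
  congr 1
  omega

lemma BN.prod_sign (d : ℕ) (hd : 0 < d) (ζ : ℂ) (hζ : IsPrimitiveRoot ζ d) :
    ∏ t ∈ range d, (-ζ ^ (t + 1)) = -1 := by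
  have hprod : ∏ t ∈ range d, (-ζ ^ (t + 1))
      = (-1 : ℂ) ^ d * ζ ^ (∑ t ∈ range d, (t + 1)) := by
    rw [show (fun t => -ζ ^ (t + 1)) = (fun t => (-1 : ℂ) * ζ ^ (t + 1)) by funext t; ring]
    rw [Finset.prod_mul_distrib, Finset.prod_const, card_range,
      Finset.prod_pow_eq_pow_sum]
  rw [hprod]
  have hSS := BN.sum_range_add_one_mul_two d hd
  rcases Nat.even_or_odd d with he | ho
  · obtain ⟨m, hm⟩ := he
    have hS : (∑ t ∈ range d, (t + 1)) = m * (d + 1) := by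
      have : d * (d + 1) = (m * (d + 1)) * 2 := by rw [hm]; ring
      rw [this] at hSS
      exact Nat.eq_of_mul_eq_mul_right (by omega) hSS
    have hm2 : m = d / 2 := by omega
    rw [hS, pow_mul, hm2, BN.neg_pow_half d hd ⟨d / 2, by omega⟩ ζ hζ,
      Even.neg_one_pow ⟨m, hm⟩, Odd.neg_one_pow ⟨m, by omega⟩, one_mul]
  · obtain ⟨r, hr⟩ := ho
    have hS : (∑ t ∈ range d, (t + 1)) = d * (r + 1) := by
      have : d * (d + 1) = (d * (r + 1)) * 2 := by rw [hr]; ring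
      rw [this] at hSS
      exact Nat.eq_of_mul_eq_mul_right (by omega) hSS
    rw [hS, pow_mul, hζ.pow_eq_one, one_pow, Odd.neg_one_pow ⟨r, hr⟩, mul_one]

open Polynomial in
lemma BN.prod_poly (d : ℕ) (hd : 0 < d) (ζ : ℂ) (hζ : IsPrimitiveRoot ζ d) :
    ∏ t ∈ range d, (1 - Polynomial.C (ζ ^ (t + 1)) * Polynomial.X) =
      1 - (Polynomial.X : ℂ[X]) ^ d := by
  apply Polynomial.funext
  intro x
  have hroots := X_pow_sub_C_eq_prod hζ hd (one_pow d)
  have hx : x ^ d - 1 = ∏ t ∈ range d, (x - ζ ^ t) := by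
    have := congrArg (Polynomial.eval x) hroots
    simpa [Polynomial.eval_prod] using this
  have hfac : ∀ t ∈ range d, (1 - ζ ^ (t + 1) * x) = (-ζ ^ (t + 1)) * (x - ζ ^ (d - 1 - t)) := by
    intro t ht
    rw [mem_range] at ht
    have h1 : ζ ^ (t + 1) * ζ ^ (d - 1 - t) = 1 := by
      rw [← pow_add]
      have : t + 1 + (d - 1 - t) = d := by omega
      rw [this, hζ.pow_eq_one]
    linear_combination -h1
  have hrefl : ∏ t ∈ range d, (x - ζ ^ (d - 1 - t)) = ∏ t ∈ range d, (x - ζ ^ t) :=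
    Finset.prod_range_reflect (fun t => x - ζ ^ t) d
  rw [Polynomial.eval_prod]
  simp only [Polynomial.eval_sub, Polynomial.eval_one, Polynomial.eval_mul, Polynomial.eval_C,
    Polynomial.eval_X, Polynomial.eval_pow]
  rw [Finset.prod_congr rfl hfac, Finset.prod_mul_distrib, hrefl, ← hx,
    BN.prod_sign d hd ζ hζ]
  ring






open PowerSeries in
lemma BN.prod_ps (d : ℕ) (hd : 0 < d) (ζ : ℂ) (hζ : IsPrimitiveRoot ζ d) :
    ∏ t ∈ range d, (1 - C (ζ ^ (t + 1)) * X) = 1 - (X : PowerSeries ℂ) ^ d := by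
  have := congrArg (Polynomial.coeToPowerSeries.ringHom (R := ℂ)) (BN.prod_poly d hd ζ hζ)
  rw [map_prod, map_sub, map_one, map_pow] at this
  simpa only [map_sub, map_one, map_mul, Polynomial.coeToPowerSeries.ringHom_apply,
    Polynomial.coe_C, Polynomial.coe_X] using this

open PowerSeries in
lemma BN.prod_one_sub_pow (d k : ℕ) (hd : 0 < d) (ζ : ℂ) (hζ : IsPrimitiveRoot ζ d) :
    ∏ i ∈ range (d * k), (1 - C (ζ ^ (i + 1)) * X) = (1 - (X : PowerSeries ℂ) ^ d) ^ k := by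
  induction k with
  | zero => simp
  | succ k ih =>
    have : d * (k + 1) = d * k + d := by ring
    rw [this, Finset.prod_range_add, ih, pow_succ]
    congr 1
    rw [← BN.prod_ps d hd ζ hζ]
    apply Finset.prod_congr rfl
    intro t _
    have : ζ ^ (d * k + t + 1) = ζ ^ (t + 1) := by
      rw [show d * k + t + 1 = d * k + (t + 1) by ring, pow_add, pow_mul, hζ.pow_eq_one,
        one_pow, one_mul]
    rw [this]

open PowerSeries in
lemma BN.coeff_eval (d k : ℕ) (hd : 0 < d) (hk : 0 < k) (ζ : ℂ) (hζ : IsPrimitiveRoot ζ d) :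
    PowerSeries.coeff (d * k)
        (∏ i ∈ range (d * k), PowerSeries.mk fun m => (ζ ^ (i + 1)) ^ m)
      = ((2 * k - 1).choose k : ℂ) := by
  set F := ∏ i ∈ range (d * k), PowerSeries.mk fun m => (ζ ^ (i + 1)) ^ m with hF
  have h1 : (1 - (X : PowerSeries ℂ) ^ d) ^ k * F = 1 := by
    rw [← BN.prod_one_sub_pow d k hd ζ hζ, hF, ← Finset.prod_mul_distrib]
    rw [Finset.prod_congr rfl (fun i _ => BN.geom_inv (ζ ^ (i + 1))), Finset.prod_const_one]
  have hFH : F = BN.H d k := by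
    calc F = ((1 - (X : PowerSeries ℂ) ^ d) ^ k * BN.H d k) * F := by
            rw [BN.Hser_inv d k hd, one_mul]
      _ = BN.H d k * ((1 - (X : PowerSeries ℂ) ^ d) ^ k * F) := by ring
      _ = BN.H d k := by rw [h1, mul_one]
  rw [hFH, BN.H, coeff_mk, if_pos (Dvd.intro k rfl), Nat.mul_div_cancel_left _ hd]
  congr 2
  omega

lemma BN.sum_gcd (N : ℕ) (hN : 0 < N) (c : ℕ → ℂ) :
    ∑ j ∈ range N, c (Nat.gcd N j) =
      ∑ k ∈ N.divisors, (Nat.totient (N / k) : ℂ) * c k := by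
  rw [← Finset.sum_fiberwise_of_maps_to
    (g := fun j => Nat.gcd N j) (t := N.divisors)
    (fun j _ => Nat.mem_divisors.mpr ⟨Nat.gcd_dvd_left N j, hN.ne'⟩)]
  apply Finset.sum_congr rfl
  intro k hk
  obtain ⟨hkd, _⟩ := Nat.mem_divisors.mp hk
  have hcong : ∀ j ∈ {j ∈ range N | Nat.gcd N j = k}, c (Nat.gcd N j) = c k := by
    intro j hj
    rw [(Finset.mem_filter.mp hj).2]
  rw [Finset.sum_congr rfl hcong, Finset.sum_const, ← Nat.totient_div_of_dvd hkd,
    nsmul_eq_mul]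




open PowerSeries in
/-- Brualdi–Newman formula: for every `N ≥ 1`, `N` times the number of vectors
`(a_0, …, a_{N-1}) ∈ ℕ^N` with `a_0 + ⋯ + a_{N-1} = N` and
`a_0 + 2a_1 + ⋯ + N·a_{N-1} ≡ 0 (mod N)` equals `∑_{k ∣ N} φ(N/k)·C(2k-1, k)`. -/
theorem stmt12 (N : ℕ) (hN : 1 ≤ N) :
    N * Nat.card {a : Fin N →₀ ℕ //
        (∑ i, a i) = N ∧ N ∣ ∑ i : Fin N, (i.val + 1) * a i} =
      ∑ k ∈ N.divisors, Nat.totient (N / k) * Nat.choose (2 * k - 1) k := by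
  classical
  have hN0 : 0 < N := hN
  set W : (Fin N →₀ ℕ) → ℕ := fun a => ∑ i : Fin N, (i.val + 1) * a i with hWdef
  set A : Finset (Fin N →₀ ℕ) := Finset.finsuppAntidiag Finset.univ N with hA
  set p : ℕ := #{a ∈ A | N ∣ W a} with hp
  -- step 1: Nat.card equals p
  have hcard : Nat.card {a : Fin N →₀ ℕ //
      (∑ i, a i) = N ∧ N ∣ ∑ i : Fin N, (i.val + 1) * a i} = p := by
    rw [hp, ← Nat.card_eq_finsetCard]
    apply Nat.card_congr
    apply Equiv.subtypeEquivRight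
    intro a
    simp only [Finset.mem_filter, hA, Finset.mem_finsuppAntidiag, hWdef]
    constructor
    · rintro ⟨h1, h2⟩
      exact ⟨⟨h1, Finset.subset_univ _⟩, h2⟩
    · rintro ⟨⟨h1, _⟩, h2⟩
      exact ⟨h1, h2⟩
  rw [hcard]
  -- move to ℂ
  have hω := Complex.isPrimitiveRoot_exp N hN0.ne'
  set ω : ℂ := Complex.exp (2 * Real.pi * Complex.I / N) with hωdef
  have main : ((N * p : ℕ) : ℂ) =
      ((∑ k ∈ N.divisors, Nat.totient (N / k) * Nat.choose (2 * k - 1) k : ℕ) : ℂ) := by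
    push_cast
    have step2 : (N : ℂ) * p = ∑ a ∈ A, (if N ∣ W a then (N : ℂ) else 0) := by
      rw [← Finset.sum_filter, Finset.sum_const, hp, nsmul_eq_mul, mul_comm]
    have step3 : ∀ a ∈ A, (if N ∣ W a then (N : ℂ) else 0)
        = ∑ j ∈ range N, (ω ^ W a) ^ j := by
      intro a _
      by_cases h : N ∣ W a
      · rw [if_pos h, (hω.pow_eq_one_iff_dvd _).mpr h]
        simp
      · rw [if_neg h]
        have hx : ω ^ W a ≠ 1 := fun hh => h ((hω.pow_eq_one_iff_dvd _).mp hh)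
        rw [geom_sum_eq hx]
        have hXN : (ω ^ W a) ^ N = 1 := by
          rw [← pow_mul, mul_comm, pow_mul, hω.pow_eq_one, one_pow]
        rw [hXN]
        simp
    have step4 : ∑ a ∈ A, ∑ j ∈ range N, (ω ^ W a) ^ j
        = ∑ j ∈ range N, ∑ a ∈ A, (ω ^ j) ^ W a := by
      rw [Finset.sum_comm]
      apply Finset.sum_congr rfl
      intro j _
      apply Finset.sum_congr rfl
      intro a _
      rw [← pow_mul, ← pow_mul, mul_comm]
    have step5 : ∀ j, ∑ a ∈ A, (ω ^ j) ^ W a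
        = PowerSeries.coeff N
            (∏ i : Fin N, PowerSeries.mk fun m => ((ω ^ j) ^ (i.val + 1)) ^ m) := by
      intro j
      rw [PowerSeries.coeff_prod]
      apply Finset.sum_congr rfl
      intro l _
      rw [hWdef]
      simp only [coeff_mk]
      rw [← Finset.prod_pow_eq_pow_sum]
      exact Finset.prod_congr rfl fun i _ => pow_mul (ω ^ j) (i.val + 1) (l i)
    have step6 : ∀ j ∈ range N,
        PowerSeries.coeff N
            (∏ i : Fin N, PowerSeries.mk fun m => ((ω ^ j) ^ (i.val + 1)) ^ m)
          = ((2 * Nat.gcd N j - 1).choose (Nat.gcd N j) : ℂ) := by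
      intro j _
      set k := Nat.gcd N j with hk
      have hkdvd : k ∣ N := Nat.gcd_dvd_left N j
      have hk0 : 0 < k := Nat.gcd_pos_of_pos_left j hN0
      set d := N / k with hd
      have hd0 : 0 < d := Nat.div_pos (Nat.le_of_dvd hN0 hkdvd) hk0
      have hdk : d * k = N := by
        rw [hd, Nat.div_mul_cancel hkdvd]
      have hζ : IsPrimitiveRoot (ω ^ j) d := by
        have hωk : IsPrimitiveRoot (ω ^ k) d :=
          hω.pow hN0 (by rw [hd, Nat.mul_div_cancel' hkdvd])
        have hjk : k ∣ j := Nat.gcd_dvd_right N j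
        have : ω ^ j = (ω ^ k) ^ (j / k) := by
          rw [← pow_mul, Nat.mul_div_cancel' hjk]
        rw [this]
        apply hωk.pow_of_coprime
        have h := Nat.coprime_div_gcd_div_gcd (m := N) (n := j) (hk ▸ hk0)
        rw [← hk] at h
        exact h.symm
      have hprod : (∏ i : Fin N, PowerSeries.mk fun m => ((ω ^ j) ^ (i.val + 1)) ^ m)
          = ∏ i ∈ range (d * k), PowerSeries.mk fun m => ((ω ^ j) ^ (i + 1)) ^ m := by
        rw [hdk]
        exact Fin.prod_univ_eq_prod_range (fun i => PowerSeries.mk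
          fun m => ((ω ^ j) ^ (i + 1)) ^ m) N
      rw [hprod, ← hdk, BN.coeff_eval d k hd0 hk0 _ hζ]
    calc (N : ℂ) * p = ∑ a ∈ A, (if N ∣ W a then (N : ℂ) else 0) := step2
      _ = ∑ a ∈ A, ∑ j ∈ range N, (ω ^ W a) ^ j := Finset.sum_congr rfl step3
      _ = ∑ j ∈ range N, ∑ a ∈ A, (ω ^ j) ^ W a := step4
      _ = ∑ j ∈ range N, ((2 * Nat.gcd N j - 1).choose (Nat.gcd N j) : ℂ) := by
          refine Finset.sum_congr rfl fun j hj => ?_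
          rw [step5 j, step6 j hj]
      _ = ∑ k ∈ N.divisors, (Nat.totient (N / k) : ℂ)
            * ((2 * k - 1).choose k : ℂ) :=
          BN.sum_gcd N hN0 (fun k => ((2 * k - 1).choose k : ℂ))
  exact_mod_cast main
end

section
/- For every integer N ≥ 3, the number of vectors (a_0,…,a_{N−1}) ∈ ℕ^N satisfying a_0 + a_1 + ⋯ + a_{N−1} = N and 0·a_0 + 1·a_1 + ⋯ + (N−1)·a_{N−1} ≡ 0 (mod N) is at most C(2N−2, N−2), the binomial coefficient 2N−2 choose N−2. -/
private lemma stmt14_helper (m x y D c d : ℕ) (hx : x ≤ m) (hy : y ≤ m)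
    (hc : x + D = m * c) (hd : y + D = m * d) :
    x = y ∨ (x = m ∧ y = 0) ∨ (x = 0 ∧ y = m) := by
  have key : x + m * d = y + m * c := by omega
  rcases lt_trichotomy c d with h | h | h
  · have h1 : m * c + m ≤ m * d := by
      have := Nat.mul_le_mul_left m (by omega : c + 1 ≤ d)
      nlinarith
    omega
  · subst h; left; omega
  · have h1 : m * d + m ≤ m * c := by
      have := Nat.mul_le_mul_left m (by omega : d + 1 ≤ c)
      nlinarith
    omega

private lemma stmt14_sumsplit (n : ℕ) (a : Fin (n + 3) → ℕ) :
    ∑ i, a i = a 0 + a 1 + ∑ k : Fin (n + 1), a k.succ.succ := by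
  rw [Fin.sum_univ_succ, Fin.sum_univ_succ, Fin.succ_zero_eq_one]
  ring

private lemma stmt14_wsplit (n : ℕ) (a : Fin (n + 3) → ℕ) :
    ∑ i : Fin (n + 3), i.val * a i
      = a 1 + ∑ k : Fin (n + 1), (k.val + 2) * a k.succ.succ := by
  rw [Fin.sum_univ_succ, Fin.sum_univ_succ, Fin.succ_zero_eq_one]
  simp [Fin.val_succ]

/-- The special element of `Fin (n+2) → ℕ`: 1 at index 0, n+2 at index 1. -/
private def stmt14_special (n : ℕ) : Fin (n + 2) → ℕ :=
  fun j => if j = 0 then 1 else if j = 1 then n + 2 else 0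

private lemma stmt14_special_sum (n : ℕ) : ∑ j, stmt14_special n j = n + 3 := by
  unfold stmt14_special
  rw [Fin.sum_univ_succ, Fin.sum_univ_succ]
  have h1 : (0 : Fin (n+1)).succ = 1 := Fin.succ_zero_eq_one
  simp [Fin.succ_ne_zero, h1, Fin.succ_succ_ne_one]
  omega

/-- If `a` satisfies the constraints and `a 0 ≠ n+3`, then the "shift" of `a`
is not the special vector. -/
private lemma stmt14_not_special (n : ℕ) (a : Fin (n + 3) → ℕ)
    (hs : ∑ i, a i = n + 3) (hd : (n + 3) ∣ ∑ i : Fin (n + 3), i.val * a i)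
    (h0 : a 0 ≠ n + 3) :
    (fun j : Fin (n+2) => if j = 0 then a 0 + a 1 else a j.succ) ≠ stmt14_special n := by
  intro hab
  have h01 : a 0 + a 1 = 1 := by
    have := congrFun hab 0
    simpa [stmt14_special] using this
  have h2 : a 2 = n + 2 := by
    have := congrFun hab 1
    have h10 : (1 : Fin (n+2)) ≠ 0 := by
      simp [Fin.ext_iff]
    have h12 : (1 : Fin (n+2)).succ = 2 := by
      rw [← Fin.succ_zero_eq_one, Fin.succ_zero_eq_one, Fin.succ_one_eq_two]
    simpa [stmt14_special, h10, h12] using this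
  have h3 : ∀ k : Fin n, a k.succ.succ.succ = 0 := by
    intro k
    have := congrFun hab k.succ.succ
    have hk0 : (k.succ.succ : Fin (n+2)) ≠ 0 := Fin.succ_ne_zero _
    have hk1 : (k.succ.succ : Fin (n+2)) ≠ 1 := by
      rw [← Fin.succ_zero_eq_one]
      exact fun h => Fin.succ_ne_zero _ (Fin.succ_injective _ h)
    simpa [stmt14_special, hk0, hk1] using this
  -- compute the weighted sum of a
  have hw : ∑ i : Fin (n + 3), i.val * a i = a 1 + 2 * (n + 2) := by
    rw [stmt14_wsplit]
    congr 1
    rw [Fin.sum_univ_succ]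
    have h02 : ((0 : Fin (n+1)).succ.succ : Fin (n+3)) = 2 := by
      rw [Fin.succ_zero_eq_one, Fin.succ_one_eq_two]
    simp [h02, h2, h3]
  rw [hw] at hd
  obtain ⟨c, hc⟩ := hd
  have hb1 : a 1 ≤ 1 := by omega
  have hcase : c = 0 ∨ c = 1 ∨ 2 ≤ c := by omega
  rcases hcase with rfl | rfl | hc2
  · omega
  · omega
  · have : (n + 3) * 2 ≤ (n + 3) * c := Nat.mul_le_mul_left _ hc2
    omega

private lemma stmt14_key (n : ℕ) :
    Nat.card {a : Fin (n + 3) → ℕ //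
        (∑ i, a i) = n + 3 ∧ (n + 3) ∣ ∑ i : Fin (n + 3), i.val * a i}
      ≤ Nat.choose (2 * n + 4) (n + 1) := by
  classical
  set T := {b : Fin (n + 2) → ℕ // ∑ j, b j = n + 3} with hT
  have eT : Sym (Fin (n + 2)) (n + 3) ≃ T := Sym.equivNatSumOfFintype _ _
  have : Finite T := Finite.of_equiv _ eT
  have hcardT : Nat.card T = Nat.choose (2 * n + 4) (n + 1) := by
    rw [← Nat.card_congr eT, Nat.card_eq_fintype_card, Sym.card_sym_eq_choose,
      Fintype.card_fin]
    have h1 : n + 2 + (n + 3) - 1 = 2 * n + 4 := by omega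
    have h2 : (2 * n + 4) - (n + 3) = n + 1 := by omega
    rw [h1, ← Nat.choose_symm (by omega : n + 3 ≤ 2 * n + 4), h2]
  rw [← hcardT]
  -- define the injection
  refine Nat.card_le_card_of_injective
    (fun x => if h : x.val 0 = n + 3 then ⟨stmt14_special n, stmt14_special_sum n⟩
      else ⟨fun j => if j = 0 then x.val 0 + x.val 1 else x.val j.succ, ?_⟩) ?_
  · obtain ⟨a, hs, hd⟩ := x
    rw [Fin.sum_univ_succ]
    simp only [Fin.succ_ne_zero, if_false, if_true, reduceIte]
    have := stmt14_sumsplit n a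
    omega
  · rintro ⟨a, hsa, hda⟩ ⟨b, hsb, hdb⟩ hab
    simp only at hab
    by_cases ha0 : a 0 = n + 3 <;> by_cases hb0 : b 0 = n + 3
    · -- both are (n+3)·e₀
      have key : ∀ c : Fin (n+3) → ℕ, ∑ i, c i = n + 3 → c 0 = n + 3 →
          ∀ i, c i = (if i = (0 : Fin (n+3)) then n + 3 else 0) := by
        intro c hsc hc0 i
        have hsum := stmt14_sumsplit n c
        have hzero : ∑ k : Fin (n + 1), c k.succ.succ = 0 := by omega
        have hterm : ∀ k : Fin (n+1), c k.succ.succ = 0 := by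
          intro k
          exact (Finset.sum_eq_zero_iff.mp hzero) k (Finset.mem_univ k)
        refine Fin.cases ?_ (fun j => ?_) i
        · simpa using hc0
        · have hj0 : (j.succ : Fin (n+3)) ≠ 0 := Fin.succ_ne_zero j
          rw [if_neg hj0]
          refine Fin.cases ?_ (fun k => ?_) j
          · rw [Fin.succ_zero_eq_one]; omega
          · exact hterm k
      refine Subtype.ext (funext fun i => ?_)
      show a i = b i
      rw [key a hsa ha0 i, key b hsb hb0 i]
    · rw [dif_pos ha0, dif_neg hb0] at hab
      exact absurd (congrArg Subtype.val hab).symm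
        (stmt14_not_special n b hsb hdb hb0)
    · rw [dif_neg ha0, dif_pos hb0] at hab
      exact absurd (congrArg Subtype.val hab)
        (stmt14_not_special n a hsa hda ha0)
    · rw [dif_neg ha0, dif_neg hb0] at hab
      have hab' : (fun j : Fin (n+2) => if j = 0 then a 0 + a 1 else a j.succ)
          = (fun j : Fin (n+2) => if j = 0 then b 0 + b 1 else b j.succ) :=
        congrArg Subtype.val hab
      have h01 : a 0 + a 1 = b 0 + b 1 := by simpa using congrFun hab' 0
      have h2 : ∀ k : Fin (n+1), a k.succ.succ = b k.succ.succ := by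
        intro k
        have := congrFun hab' k.succ
        simpa [Fin.succ_ne_zero] using this
      -- weighted sums
      have hwa := stmt14_wsplit n a
      have hwb := stmt14_wsplit n b
      have hDeq : ∑ k : Fin (n + 1), (k.val + 2) * a k.succ.succ
          = ∑ k : Fin (n + 1), (k.val + 2) * b k.succ.succ :=
        Finset.sum_congr rfl (fun k _ => by rw [h2 k])
      rw [hwa] at hda
      rw [hwb, ← hDeq] at hdb
      obtain ⟨c, hc⟩ := hda
      obtain ⟨d, hd⟩ := hdb
      have hsa' := stmt14_sumsplit n a
      have hsb' := stmt14_sumsplit n b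
      have hxa : a 1 ≤ n + 3 := by omega
      have hxb : b 1 ≤ n + 3 := by omega
      have htri := stmt14_helper (n + 3) (a 1) (b 1) _ c d hxa hxb hc hd
      have hab1 : a 1 = b 1 := by
        rcases htri with h | ⟨h1, h2'⟩ | ⟨h1, h2'⟩
        · exact h
        · exfalso
          have hRa : ∑ k : Fin (n + 1), a k.succ.succ
              = ∑ k : Fin (n + 1), b k.succ.succ :=
            Finset.sum_congr rfl (fun k _ => h2 k)
          omega
        · exfalso
          have hRa : ∑ k : Fin (n + 1), a k.succ.succ
              = ∑ k : Fin (n + 1), b k.succ.succ :=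
            Finset.sum_congr rfl (fun k _ => h2 k)
          omega
      refine Subtype.ext (funext fun i => ?_)
      show a i = b i
      refine Fin.cases (by omega) (fun j => ?_) i
      refine Fin.cases ?_ (fun k => ?_) j
      · rw [Fin.succ_zero_eq_one]; exact hab1
      · exact h2 k

/-- For every `N ≥ 3`, the number of vectors `(a_0, …, a_{N-1}) ∈ ℕ^N` with
`a_0 + ⋯ + a_{N-1} = N` and `0·a_0 + 1·a_1 + ⋯ + (N-1)·a_{N-1} ≡ 0 (mod N)` is at most
the binomial coefficient `C(2N-2, N-2)`. -/
theorem stmt14 (N : ℕ) (hN : 3 ≤ N) :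
    Nat.card {a : Fin N →₀ ℕ //
        (∑ i, a i) = N ∧ N ∣ ∑ i : Fin N, i.val * a i} ≤
      Nat.choose (2 * N - 2) (N - 2) := by
  obtain ⟨n, rfl⟩ : ∃ n, N = n + 3 := ⟨N - 3, by omega⟩
  have hre : 2 * (n + 3) - 2 = 2 * n + 4 := by omega
  have hre2 : n + 3 - 2 = n + 1 := by omega
  rw [hre, hre2]
  have e : {a : Fin (n+3) →₀ ℕ //
        (∑ i, a i) = n + 3 ∧ (n + 3) ∣ ∑ i : Fin (n+3), i.val * a i}
      ≃ {a : Fin (n + 3) → ℕ //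
        (∑ i, a i) = n + 3 ∧ (n + 3) ∣ ∑ i : Fin (n + 3), i.val * a i} :=
    Finsupp.equivFunOnFinite.subtypeEquiv (fun a => Iff.rfl)
  rw [Nat.card_congr e]
  exact stmt14_key n
end

section
/- Let N ≥ 3 and d ≥ N be integers, let e ∈ ℂ be a primitive d-th root of unity, and let α_0,…,α_{N−1} be integers. Let I ⊆ ℂ[x_0,…,x_{N−1}] be the ideal generated by all monomials x_0^{m_0}⋯x_{N−1}^{m_{N−1}} of total degree d with α_0 m_0 + ⋯ + α_{N−1} m_{N−1} ≡ 0 (mod d). Then there exists a nonzero homogeneous polynomial F of degree d−1 such that (x_0 + x_1 + ⋯ + x_{N−1})·F ∈ I. -/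
open MvPolynomial Finset


/-- Let `I ⊆ ℂ[x_0, …, x_{N-1}]` be the ideal generated by all monomials of total degree
`d` invariant under `x_i ↦ e^{α_i} x_i`, i.e. with `α_0 m_0 + ⋯ + α_{N-1} m_{N-1} ≡ 0
(mod d)`, where `e` is a primitive `d`-th root of unity. Then there is a nonzero
homogeneous `F` of degree `d - 1` with `(x_0 + ⋯ + x_{N-1})·F ∈ I`. -/
theorem stmt18 (N d : ℕ) (hN : 3 ≤ N) (hd : N ≤ d) (e : ℂ) (he : IsPrimitiveRoot e d)
    (α : Fin N → ℤ) :
    ∃ F : MvPolynomial (Fin N) ℂ, F ≠ 0 ∧ F.IsHomogeneous (d - 1) ∧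
      (∑ i : Fin N, MvPolynomial.X i) * F ∈
        Ideal.span {g : MvPolynomial (Fin N) ℂ | ∃ m : Fin N →₀ ℕ,
          (∑ i, m i) = d ∧ ((d : ℤ) ∣ ∑ i : Fin N, α i * m i) ∧
          g = MvPolynomial.monomial m 1} := by
  classical
  have hd0 : 0 < d := by omega
  have he0 : e ≠ 0 := he.ne_zero hd0.ne'
  have hzsum : ∀ (s : Finset (Fin N)) (g : Fin N → ℤ),
      e ^ (∑ i ∈ s, g i) = ∏ i ∈ s, e ^ g i := by
    intro s g
    induction s using Finset.induction with
    | empty => simp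
    | insert _ _ h ih => rw [Finset.sum_insert h, Finset.prod_insert h, zpow_add₀ he0, ih]
  -- the twisting endomorphism
  set σ : MvPolynomial (Fin N) ℂ →ₐ[ℂ] MvPolynomial (Fin N) ℂ :=
    aeval (fun i => C (e ^ (α i)) * X i) with hσ
  -- weight
  set w : (Fin N →₀ ℕ) → ℂ := fun m => e ^ (∑ i, α i * (m i : ℤ)) with hw
  have hσmon : ∀ (m : Fin N →₀ ℕ) (c : ℂ), σ (monomial m c) = monomial m (c * w m) := by
    intro m c
    rw [hσ, aeval_monomial]
    have h1 : (m.prod fun i n => (C (e ^ (α i)) * X i : MvPolynomial (Fin N) ℂ) ^ n)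
        = C (w m) * m.prod fun i n => (X i : MvPolynomial (Fin N) ℂ) ^ n := by
      rw [Finsupp.prod, Finsupp.prod]
      have h2 : ∀ i ∈ m.support, (C (e ^ (α i)) * X i : MvPolynomial (Fin N) ℂ) ^ m i
          = C (e ^ (α i * (m i : ℤ))) * X i ^ m i := by
        intro i _
        rw [mul_pow, ← C_pow, ← zpow_natCast (e ^ α i), ← zpow_mul]
      rw [Finset.prod_congr rfl h2, Finset.prod_mul_distrib,
        (map_prod C (fun x => e ^ (α x * (m x : ℤ))) m.support).symm, ← hzsum]
      have h3 : (∑ i ∈ m.support, α i * (m i : ℤ)) = ∑ i : Fin N, α i * (m i : ℤ) := by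
        refine Finset.sum_subset (Finset.subset_univ m.support) ?_
        intro i _ hi
        simp [Finsupp.notMem_support_iff.mp hi]
      rw [hw, h3]
    rw [h1, algebraMap_eq, monomial_eq, ← mul_assoc, ← C_mul]
  -- the linear factors
  set f : ℕ → MvPolynomial (Fin N) ℂ :=
    fun k => ∑ i, C (e ^ ((k : ℤ) * α i)) * X i with hf
  have hf0 : f 0 = ∑ i : Fin N, X i := by
    simp [hf]
  have hfd : f d = f 0 := by
    rw [hf]
    refine Finset.sum_congr rfl fun i _ => ?_
    congr 2
    rw [Nat.cast_zero, zero_mul, zpow_zero, zpow_mul, zpow_natCast, he.pow_eq_one, one_zpow]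
  have hfne : ∀ k, f k ≠ 0 := by
    intro k h
    set i0 : Fin N := ⟨0, by omega⟩ with hi0
    have hcoeff : coeff (Finsupp.single i0 1) (f k) = e ^ ((k:ℤ) * α i0) := by
      rw [hf]
      simp only [coeff_sum]
      rw [Finset.sum_eq_single i0]
      · rw [C_mul_X_eq_monomial, coeff_monomial, if_pos rfl]
      · intro i _ hi
        rw [C_mul_X_eq_monomial, coeff_monomial, if_neg]
        exact fun hc => hi ((Finsupp.single_left_inj one_ne_zero).mp hc)
      · simp
    rw [h, coeff_zero] at hcoeff
    exact zpow_ne_zero _ he0 hcoeff.symm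
  have hσf : ∀ k, σ (f k) = f (k + 1) := by
    intro k
    rw [hf]
    simp only [hσ, map_sum, map_mul, aeval_C, aeval_X, algebraMap_eq]
    refine Finset.sum_congr rfl fun i _ => ?_
    rw [← mul_assoc, ← C_mul, ← zpow_add₀ he0]
    congr 2
    push_cast
    ring
  have hfhom : ∀ k, (f k).IsHomogeneous 1 := by
    intro k
    rw [hf]
    exact IsHomogeneous.sum _ _ _ fun i _ => by
      simpa using (isHomogeneous_C _ (e ^ ((k:ℤ) * α i))).mul (isHomogeneous_X _ i)
  -- F and P
  set F : MvPolynomial (Fin N) ℂ := ∏ k ∈ Finset.range (d - 1), f (k + 1) with hF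
  set P : MvPolynomial (Fin N) ℂ := ∏ k ∈ Finset.range d, f k with hP
  have hPF : P = F * f 0 := by
    rw [hP, hF]
    conv_lhs => rw [show d = (d - 1) + 1 from by omega]
    rw [Finset.prod_range_succ']
  have hLF : (∑ i : Fin N, X i) * F = P := by
    rw [hPF, ← hf0]; ring
  have hσP : σ P = P := by
    have h1 : σ P = ∏ k ∈ Finset.range d, f (k + 1) := by
      rw [hP, map_prod]
      exact Finset.prod_congr rfl fun k _ => hσf k
    have h2 : σ P * f 0 = P * f 0 := by
      rw [h1, ← Finset.prod_range_succ', Finset.prod_range_succ, hfd, ← hP]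
    exact mul_right_cancel₀ (hfne 0) h2
  -- homogeneity
  have hFhom : F.IsHomogeneous (d - 1) := by
    have h := IsHomogeneous.prod (Finset.range (d-1)) (fun k => f (k+1)) (fun _ => 1)
      (fun k _ => hfhom (k+1))
    simpa using h
  have hPhom : P.IsHomogeneous d := by
    rw [← hLF]
    have h1 : (∑ i : Fin N, X i : MvPolynomial (Fin N) ℂ).IsHomogeneous 1 :=
      IsHomogeneous.sum _ _ _ fun i _ => isHomogeneous_X _ i
    have h := h1.mul hFhom
    rwa [show 1 + (d - 1) = d from by omega] at h
  have hFne : F ≠ 0 := by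
    rw [hF]
    exact Finset.prod_ne_zero_iff.mpr fun k _ => hfne (k + 1)
  refine ⟨F, hFne, hFhom, ?_⟩
  rw [hLF]
  have hweight : ∀ m : Fin N →₀ ℕ, (Finsupp.weight 1 m : ℕ) = ∑ i : Fin N, m i := by
    intro m
    rw [Finsupp.weight_apply, Finsupp.sum]
    simp only [Pi.one_apply, smul_eq_mul, mul_one]
    exact Finset.sum_subset (Finset.subset_univ _) (fun i _ hi => Finsupp.notMem_support_iff.mp hi)
  -- each monomial of P is an invariant monomial
  have key : ∀ m ∈ P.support, (d : ℤ) ∣ ∑ i : Fin N, α i * m i := by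
    intro m hm
    have hc : coeff m P ≠ 0 := mem_support_iff.mp hm
    have hco : coeff m (σ P) = coeff m P * w m := by
      conv_lhs => rw [P.as_sum]
      rw [map_sum]
      simp only [hσmon]
      rw [coeff_sum, Finset.sum_eq_single m]
      · rw [coeff_monomial, if_pos rfl]
      · intro b _ hb
        rw [coeff_monomial, if_neg hb]
      · intro h
        exact absurd hm h
    rw [hσP] at hco
    have hwm : w m = 1 :=
      mul_left_cancel₀ hc (hco.symm.trans (mul_one _).symm)
    rw [hw] at hwm
    exact (he.zpow_eq_one_iff_dvd _).mp hwm
  rw [P.as_sum]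
  refine Ideal.sum_mem _ fun m hm => ?_
  have hmono : (monomial m (coeff m P) : MvPolynomial (Fin N) ℂ) = C (coeff m P) * monomial m 1 := by
    rw [C_mul_monomial, mul_one]
  rw [hmono]
  refine Ideal.mul_mem_left _ _ (Ideal.subset_span ?_)
  refine ⟨m, ?_, key m hm, rfl⟩
  rw [← hweight m]
  exact hPhom (mem_support_iff.mp hm)
end
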